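/- Distinct self-conjugate partitions of n are never adjacent in the partition graph G_n. Equivalently, the induced subgraph of G_n on the set Ax_n = {λ ⊢ n : λ = λ'} of self-conjugate partitions is edgeless. -/

import Mathlib

open Finset

/-- `P : ℕ → ℕ` (1-indexed, `P 0 = 0` by convention) is a partition of `n`:
weakly decreasing on positive indices, vanishing beyond `n`, with parts summing to `n`. -/
def IsPartition (n : ℕ) (P : ℕ → ℕ) : Prop :=
  (∀ i j : ℕ, 1 ≤ i → i ≤ j → P j ≤ P i) ∧
  (∀ i : ℕ, n < i → P i = 0) ∧
  P 0 = 0 ∧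
  (∑ i ∈ Finset.Icc 1 n, P i) = n

/-- The multiset of (positive) parts of `P`. -/
def partsOf (n : ℕ) (P : ℕ → ℕ) : Multiset ℕ :=
  ((Finset.Icc 1 n).val.map P).filter (fun x => 0 < x)

/-- `Q` arises from `P` by an elementary transfer: decrease one part `a` by 1,
increase a different part `b` (possibly a newly adjoined zero part, `b = 0`) by 1,
delete zero parts and reorder. -/
def Transfer (n : ℕ) (P Q : ℕ → ℕ) : Prop :=
  ∃ a b : ℕ, a ∈ partsOf n P ∧ (b ∈ (partsOf n P).erase a ∨ b = 0) ∧
    partsOf n Q =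
      Multiset.filter (fun x => 0 < x)
        ((a - 1) ::ₘ (b + 1) ::ₘ (((partsOf n P).erase a).erase b))

/-- Vertices of the partition graph: partitions of `n`. -/
def PartitionOf (n : ℕ) : Type := {P : ℕ → ℕ // IsPartition n P}

/-- The partition graph `G_n`: distinct partitions adjacent iff one is obtained
from the other by an elementary transfer. -/
def G (n : ℕ) : SimpleGraph (PartitionOf n) :=
  SimpleGraph.fromRel (fun P Q => Transfer n P.1 Q.1)

/-- The conjugate partition: `(conjFun n P) j = #{i ∈ [1,n] : P i ≥ j}` for `j ≥ 1`. -/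
def conjFun (n : ℕ) (P : ℕ → ℕ) : ℕ → ℕ := fun j =>
  if j = 0 then 0 else ((Finset.Icc 1 n).filter (fun i => j ≤ P i)).card

/-- The self-conjugate axis `Ax_n`. -/
def Ax (n : ℕ) : Set (PartitionOf n) := {P | ∀ j, P.1 j = conjFun n P.1 j}

/-- Graph distance from a vertex to a set of vertices. -/
noncomputable def dSet (n : ℕ) (P : PartitionOf n) (S : Set (PartitionOf n)) : ℕ :=
  sInf ((fun α => (G n).dist P α) '' S)

/-- The central region `C_n^{(r)}`. -/
def Creg (n r : ℕ) : Set (PartitionOf n) := {P | dSet n P (Ax n) ≤ r}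

/-- The thin spine `Sp_n`: the axis together with all common neighbors of
pairs of distinct axial vertices. -/
def Sp (n : ℕ) : Set (PartitionOf n) :=
  Ax n ∪ {ν | ∃ α β : PartitionOf n, α ∈ Ax n ∧ β ∈ Ax n ∧ α ≠ β ∧
    (G n).Adj ν α ∧ (G n).Adj ν β}

/-- The thick spine `Sp_n^{(r)}`. -/
def SpThick (n r : ℕ) : Set (PartitionOf n) := {P | dSet n P (Sp n) ≤ r}

/-- Ferrers diagram cells of `P` (contained in the `n × n` box for a partition of `n`). -/
def cells (n : ℕ) (P : ℕ → ℕ) : Finset (ℕ × ℕ) :=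
  (Finset.Icc 1 n ×ˢ Finset.Icc 1 n).filter (fun c => c.2 ≤ P c.1)

/-- A finite set of cells is a Ferrers diagram (a lower set of positive cells). -/
def IsDiagram (D : Finset (ℕ × ℕ)) : Prop :=
  ∀ p ∈ D, 1 ≤ p.1 ∧ 1 ≤ p.2 ∧
    ∀ q : ℕ × ℕ, 1 ≤ q.1 → 1 ≤ q.2 → q.1 ≤ p.1 → q.2 ≤ p.2 → q ∈ D

/-- `c` is a removable corner of `P`. -/
def Removable (n : ℕ) (P : ℕ → ℕ) (c : ℕ × ℕ) : Prop :=
  c ∈ cells n P ∧ IsDiagram (cells n P \ {c})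

/-- `c` is an addable corner of `P`. -/
def Addable (n : ℕ) (P : ℕ → ℕ) (c : ℕ × ℕ) : Prop :=
  1 ≤ c.1 ∧ 1 ≤ c.2 ∧ c ∉ cells n P ∧ IsDiagram (insert c (cells n P))

/-- Maximizer set of a vertex invariant. -/
def Argmax (n : ℕ) (I : PartitionOf n → ℝ) : Set (PartitionOf n) :=
  {P | ∀ Q, I Q ≤ I P}

/-- Axial concentration radius. -/
noncomputable def rhoAx (n : ℕ) (I : PartitionOf n → ℝ) : ℕ :=
  sInf {r : ℕ | Argmax n I ⊆ Creg n r}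

/-- Spinal concentration radius. -/
noncomputable def rhoSp (n : ℕ) (I : PartitionOf n → ℝ) : ℕ :=
  sInf {r : ℕ | Argmax n I ⊆ SpThick n r}

private lemma parts_pos {n : ℕ} {R : ℕ → ℕ} {x : ℕ} (hx : x ∈ partsOf n R) : 0 < x :=
  (Multiset.mem_filter.mp hx).2

private lemma countP_parts (n : ℕ) (R : ℕ → ℕ) {t : ℕ} (ht : 1 ≤ t) :
    Multiset.countP (fun x => t ≤ x) (partsOf n R) = conjFun n R t := by
  unfold partsOf conjFun
  rw [if_neg (by omega)]
  rw [Multiset.countP_filter, Multiset.countP_map]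
  have h1 : ((Finset.Icc 1 n).filter (fun i => t ≤ R i)).card
      = Multiset.countP (fun i => t ≤ R i) (Finset.Icc 1 n).val := by
    rw [Multiset.countP_eq_card_filter]; rfl
  rw [h1, Multiset.countP_eq_card_filter]
  congr 1
  apply Multiset.filter_congr
  intro x _
  constructor
  · exact fun h => h.1
  · exact fun h => ⟨h, by omega⟩

private lemma conj_symm (n : ℕ) (R : ℕ → ℕ) (hpart : IsPartition n R)
    (hc : ∀ j, R j = conjFun n R j) {i j : ℕ} (hi : 1 ≤ i) (hj : 1 ≤ j) :
    j ≤ R i ↔ i ≤ R j := by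
  obtain ⟨hmono, hvan, -, -⟩ := hpart
  rw [hc j]
  unfold conjFun
  rw [if_neg (by omega)]
  constructor
  · intro h
    have hin : i ≤ n := by
      by_contra hgt
      have := hvan i (by omega)
      omega
    have hsub : Finset.Icc 1 i ⊆ (Finset.Icc 1 n).filter (fun r => j ≤ R r) := by
      intro r hr
      simp only [Finset.mem_Icc, Finset.mem_filter] at *
      exact ⟨⟨hr.1, le_trans hr.2 hin⟩, le_trans h (hmono r i hr.1 hr.2)⟩
    have := Finset.card_le_card hsub
    simpa [Nat.card_Icc] using this
  · intro h
    by_contra hlt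
    push_neg at hlt
    have hsub : (Finset.Icc 1 n).filter (fun r => j ≤ R r) ⊆ Finset.Icc 1 (i-1) := by
      intro r hr
      simp only [Finset.mem_Icc, Finset.mem_filter] at *
      refine ⟨hr.1.1, ?_⟩
      by_contra hge
      push_neg at hge
      have := hmono i r hi (by omega)
      omega
    have := Finset.card_le_card hsub
    simp [Nat.card_Icc] at this
    omega

private lemma transfer_eq (n : ℕ) (P Q : ℕ → ℕ) (hPp : IsPartition n P) (hQp : IsPartition n Q)
    (hPc : ∀ j, P j = conjFun n P j) (hQc : ∀ j, Q j = conjFun n Q j)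
    (hT : Transfer n P Q) : P = Q := by
  obtain ⟨a, b, ha, hb, heq⟩ := hT
  have ha1 : 1 ≤ a := parts_pos ha
  set s1 := (partsOf n P).erase a with hs1
  -- extract a common shape for both cases of `hb`
  obtain ⟨s2, heq', hb1, hcnt1⟩ :
      ∃ s2 : Multiset ℕ,
        partsOf n Q = Multiset.filter (fun x => 0 < x) ((a - 1) ::ₘ (b + 1) ::ₘ s2) ∧
        (∀ x ∈ s2, 0 < x) ∧
        (∀ t : ℕ, 1 ≤ t → Multiset.countP (fun x => t ≤ x) s1
            = Multiset.countP (fun x => t ≤ x) s2 + (if t ≤ b then 1 else 0)) := by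
    rcases hb with hb | hb
    · refine ⟨s1.erase b, heq, ?_, ?_⟩
      · intro x hx
        exact parts_pos (Multiset.mem_of_mem_erase (Multiset.mem_of_mem_erase hx))
      · intro t ht
        conv_lhs => rw [← Multiset.cons_erase hb]
        rw [Multiset.countP_cons]
    · subst hb
      have h0 : s1.erase 0 = s1 := by
        apply Multiset.erase_of_notMem
        intro h0mem
        exact absurd (parts_pos (Multiset.mem_of_mem_erase h0mem)) (lt_irrefl 0)
      rw [h0] at heq
      refine ⟨s1, heq, fun x hx => parts_pos (Multiset.mem_of_mem_erase hx), ?_⟩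
      intro t ht
      rw [if_neg (by omega)]
      omega
  have hscons : a ::ₘ s1 = partsOf n P := Multiset.cons_erase ha
  -- the key pointwise equation
  have E : ∀ t : ℕ, Q t + (if t = a then 1 else 0) = P t + (if t = b + 1 then 1 else 0) := by
    intro t
    rcases Nat.eq_zero_or_pos t with ht | ht
    · subst ht
      rw [hPp.2.2.1, hQp.2.2.1, if_neg (by omega), if_neg (by omega)]
    · have hPt : P t = Multiset.countP (fun x => t ≤ x) (partsOf n P) := by
        rw [countP_parts n P ht, ← hPc]
      have hQt : Q t = Multiset.countP (fun x => t ≤ x) (partsOf n Q) := by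
        rw [countP_parts n Q ht, ← hQc]
      rw [← hscons, Multiset.countP_cons] at hPt
      rw [heq', Multiset.countP_filter, Multiset.countP_cons, Multiset.countP_cons] at hQt
      have hs2c : Multiset.countP (fun a => t ≤ a ∧ 0 < a) s2
          = Multiset.countP (fun x => t ≤ x) s2 := by
        apply Multiset.countP_congr rfl
        intro x _
        exact propext ⟨fun h => h.1, fun h => ⟨h, by omega⟩⟩
      rw [hs2c] at hQt
      have hc1 := hcnt1 t ht
      rw [hPt, hQt, hc1]
      split_ifs <;> omega
  by_cases hab : a = b + 1
  · funext t
    have := E t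
    subst hab
    omega
  · exfalso
    have hQa : Q a + 1 = P a := by
      have := E a
      rw [if_pos rfl, if_neg hab] at this
      exact this
    have hQb : Q (b + 1) = P (b + 1) + 1 := by
      have := E (b + 1)
      rw [if_pos rfl, if_neg (fun h => hab h.symm)] at this
      omega
    have hPa1 : 1 ≤ P a := by omega
    -- removed cell (a, P a) is diagonal
    have h1 : a ≤ P (P a) :=
      (conj_symm n P hPp hPc ha1 hPa1).mp (le_refl (P a))
    have h2 : ¬ a ≤ Q (P a) := by
      intro h
      have := (conj_symm n Q hQp hQc hPa1 ha1).mp h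
      omega
    have hva : P a = a := by
      have := E (P a)
      split_ifs at this <;> omega
    -- added cell (b+1, Q (b+1)) is diagonal
    have hw1 : 1 ≤ Q (b + 1) := by omega
    have h3 : b + 1 ≤ Q (Q (b + 1)) :=
      (conj_symm n Q hQp hQc (by omega) hw1).mp (le_refl (Q (b + 1)))
    have h4 : ¬ b + 1 ≤ P (Q (b + 1)) := by
      intro h
      have := (conj_symm n P hPp hPc hw1 (by omega)).mp h
      omega
    have hwb : Q (b + 1) = b + 1 := by
      have := E (Q (b + 1))
      split_ifs at this <;> omega
    have hPb : P (b + 1) = b := by omega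
    -- contradiction via monotonicity
    rcases lt_trichotomy a (b + 1) with hlt | heqq | hgt
    · have h5 : P (b + 1) ≤ P a := hPp.1 a (b + 1) ha1 (by omega)
      have hab' : a = b := by omega
      subst hab'
      have h6 : Q (a + 1) ≤ Q a := hQp.1 a (a + 1) ha1 (by omega)
      omega
    · exact hab heqq
    · have h5 : P a ≤ P (b + 1) := hPp.1 (b + 1) a (by omega) (by omega)
      omega

/-- Distinct self-conjugate partitions are never adjacent in `G_n`:
the induced subgraph on the axis is edgeless. -/
theorem axis_edgeless (n : ℕ) (hn : 1 ≤ n) (P Q : PartitionOf n)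
    (hP : P ∈ Ax n) (hQ : Q ∈ Ax n) (hne : P ≠ Q) :
    ¬ (G n).Adj P Q := by
  intro hadj
  rw [G, SimpleGraph.fromRel_adj] at hadj
  obtain ⟨hne', h | h⟩ := hadj
  · exact hne (Subtype.ext (transfer_eq n P.1 Q.1 P.2 Q.2 hP hQ h))
  · exact hne (Subtype.ext (transfer_eq n Q.1 P.1 Q.2 P.2 hQ hP h).symm)
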